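/- Let f, g : ℝⁿ → ℝ be quadratic forms with no common zero except 0 ∈ ℝⁿ. Then the set {(f(x), g(x)) : x ∈ ℝⁿ} is closed and convex. -/

import Mathlib

open Real Matrix

lemma dines_quad_exp {n : ℕ} (A : Matrix (Fin n) (Fin n) ℝ) (a b : ℝ) (x y : Fin n → ℝ) :
    (a • x + b • y) ⬝ᵥ A *ᵥ (a • x + b • y)
      = a*a*(x ⬝ᵥ A *ᵥ x) + a*b*(x ⬝ᵥ A *ᵥ y) + a*b*(y ⬝ᵥ A *ᵥ x) + b*b*(y ⬝ᵥ A *ᵥ y) := by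
  simp [Matrix.mulVec_add, Matrix.mulVec_smul, dotProduct_add, add_dotProduct,
    dotProduct_smul, smul_dotProduct, smul_eq_mul]
  ring

lemma dines_quad_smul {n : ℕ} (A : Matrix (Fin n) (Fin n) ℝ) (c : ℝ) (x : Fin n → ℝ) :
    (c • x) ⬝ᵥ A *ᵥ (c • x) = c * c * (x ⬝ᵥ A *ᵥ x) := by
  simp [Matrix.mulVec_smul, dotProduct_smul, smul_dotProduct, smul_eq_mul]; ring

lemma dines_quad_cont {n : ℕ} (A : Matrix (Fin n) (Fin n) ℝ) :
    Continuous (fun x : Fin n → ℝ => x ⬝ᵥ A *ᵥ x) := by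
  have : (fun x : Fin n → ℝ => x ⬝ᵥ A *ᵥ x) = fun x => ∑ i, x i * ∑ j, A i j * x j := by
    funext x; simp [dotProduct, Matrix.mulVec]
  rw [this]; fun_prop

theorem dines_closed_convex (n : ℕ) (f g : (Fin n → ℝ) → ℝ)
    (A B : Matrix (Fin n) (Fin n) ℝ) (hA : A.IsSymm) (hB : B.IsSymm)
    (hf : ∀ x, f x = dotProduct x (A.mulVec x))
    (hg : ∀ x, g x = dotProduct x (B.mulVec x))
    (hzero : ∀ x : Fin n → ℝ, f x = 0 → g x = 0 → x = 0) :
    IsClosed {p : ℝ × ℝ | ∃ x : Fin n → ℝ, p = (f x, g x)} ∧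
    Convex ℝ {p : ℝ × ℝ | ∃ x : Fin n → ℝ, p = (f x, g x)} := by
  have hfc : Continuous f := by
    have : f = fun x => x ⬝ᵥ A *ᵥ x := funext fun x => hf x
    rw [this]; exact dines_quad_cont A
  have hgc : Continuous g := by
    have : g = fun x => x ⬝ᵥ B *ᵥ x := funext fun x => hg x
    rw [this]; exact dines_quad_cont B
  -- scaling: c • F(x) ∈ image for c ≥ 0
  have hsmul : ∀ (c : ℝ), 0 ≤ c → ∀ x : Fin n → ℝ,
      ∃ z, f z = c * f x ∧ g z = c * g x := by
    intro c hc x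
    refine ⟨Real.sqrt c • x, ?_, ?_⟩
    · rw [hf, dines_quad_smul, Real.mul_self_sqrt hc, hf x]
    · rw [hg, dines_quad_smul, Real.mul_self_sqrt hc, hg x]
  -- additivity of the image
  have hadd : ∀ x y : Fin n → ℝ, ∃ z, f z = f x + f y ∧ g z = g x + g y := by
    intro x y
    set α : ℝ := x ⬝ᵥ A *ᵥ y + y ⬝ᵥ A *ᵥ x with hα
    set γ : ℝ := x ⬝ᵥ B *ᵥ y + y ⬝ᵥ B *ᵥ x with hγ
    set φ : ℝ → ℝ := fun s => f x * cos s ^ 2 + α * (cos s * sin s) + f y * sin s ^ 2 with hφ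
    set ψ : ℝ → ℝ := fun s => g x * cos s ^ 2 + γ * (cos s * sin s) + g y * sin s ^ 2 with hψ
    have hu : ∀ s, f (cos s • x + sin s • y) = φ s := by
      intro s
      rw [hf, dines_quad_exp, hφ]
      simp only [← hf x, ← hf y]
      ring
    have hvf : ∀ s, f ((-sin s) • x + cos s • y) = (f x + f y) - φ s := by
      intro s
      rw [hf, dines_quad_exp, hφ, hα]
      simp only [← hf x, ← hf y]
      have h1 := sin_sq_add_cos_sq s
      linear_combination (f x + f y) * h1
    have hug : ∀ s, g (cos s • x + sin s • y) = ψ s := by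
      intro s
      rw [hg, dines_quad_exp, hψ]
      simp only [← hg x, ← hg y]
      ring
    have hvg : ∀ s, g ((-sin s) • x + cos s • y) = (g x + g y) - ψ s := by
      intro s
      rw [hg, dines_quad_exp, hψ, hγ]
      simp only [← hg x, ← hg y]
      have h1 := sin_sq_add_cos_sq s
      linear_combination (g x + g y) * h1
    set W : ℝ → ℝ := fun s => φ s * ((g x + g y) - ψ s) - ((f x + f y) - φ s) * ψ s with hW
    have hWc : Continuous W := by
      rw [hW, hφ, hψ]; fun_prop
    have hW0 : W 0 = f x * g y - f y * g x := by
      simp only [hW, hφ, hψ, Real.cos_zero, Real.sin_zero]; ring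
    have hWpi : W (π/2) = -(f x * g y - f y * g x) := by
      simp only [hW, hφ, hψ, Real.cos_pi_div_two, Real.sin_pi_div_two]; ring
    have hpi2 : (0:ℝ) ≤ π/2 := by positivity
    have hex : ∃ s, W s = 0 := by
      rcases le_total (W 0) 0 with h | h
      · have := intermediate_value_Icc hpi2 hWc.continuousOn
        have h0 : (0:ℝ) ∈ Set.Icc (W 0) (W (π/2)) := by
          constructor
          · exact h
          · rw [hWpi, ← hW0]; linarith
        obtain ⟨s, _, hs⟩ := this h0
        exact ⟨s, hs⟩
      · have := intermediate_value_Icc' hpi2 hWc.continuousOn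
        have h0 : (0:ℝ) ∈ Set.Icc (W (π/2)) (W 0) := by
          constructor
          · rw [hWpi, ← hW0]; linarith
          · exact h
        obtain ⟨s, _, hs⟩ := this h0
        exact ⟨s, hs⟩
    obtain ⟨s₀, hs₀⟩ := hex
    set u : Fin n → ℝ := cos s₀ • x + sin s₀ • y with hudef
    set v : Fin n → ℝ := (-sin s₀) • x + cos s₀ • y with hvdef
    set p1 : ℝ := φ s₀
    set p2 : ℝ := ψ s₀
    set q1 : ℝ := (f x + f y) - φ s₀
    set q2 : ℝ := (g x + g y) - ψ s₀
    have hfu : f u = p1 := hu s₀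
    have hgu : g u = p2 := hug s₀
    have hfv : f v = q1 := hvf s₀
    have hgv : g v = q2 := hvg s₀
    have hdet : p1 * q2 = q1 * p2 := by
      have : W s₀ = p1 * q2 - q1 * p2 := by rw [hW]
      linarith [hs₀, this.symm.trans hs₀]
    have hsum1 : f x + f y = p1 + q1 := by ring
    have hsum2 : g x + g y = p2 + q2 := by ring
    rw [hsum1, hsum2]
    by_cases h1 : p1 = 0 ∧ p2 = 0
    · exact ⟨v, by rw [hfv, h1.1]; ring, by rw [hgv, h1.2]; ring⟩
    by_cases h2 : q1 = 0 ∧ q2 = 0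
    · exact ⟨u, by rw [hfu, h2.1]; ring, by rw [hgu, h2.2]; ring⟩
    -- both nonzero, parallel
    have hl : ∃ l : ℝ, q1 = l * p1 ∧ q2 = l * p2 := by
      by_cases hp1 : p1 = 0
      · have hp2 : p2 ≠ 0 := fun h => h1 ⟨hp1, h⟩
        refine ⟨q2 / p2, ?_, by field_simp⟩
        have : q1 * p2 = 0 := by rw [← hdet, hp1]; ring
        rcases mul_eq_zero.1 this with h | h
        · rw [h, hp1]; ring
        · exact absurd h hp2
      · refine ⟨q1 / p1, by field_simp, ?_⟩
        field_simp
        linarith [hdet]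
    obtain ⟨l, hl1, hl2⟩ := hl
    have hlne : l ≠ 0 := by
      intro h
      exact h2 ⟨by rw [hl1, h]; ring, by rw [hl2, h]; ring⟩
    rcases le_or_gt 0 (1 + l) with hpos | hneg
    · obtain ⟨z, hz1, hz2⟩ := hsmul (1 + l) hpos u
      exact ⟨z, by rw [hz1, hfu, hl1]; ring, by rw [hz2, hgu, hl2]; ring⟩
    · have hlneg : l < -1 := by linarith
      have hlne' : l ≠ 0 := hlne
      have hinv : 0 ≤ 1 + l⁻¹ := by
        have h1 : (1 + l)/l > 0 := div_pos_of_neg_of_neg (by linarith) (by linarith)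
        have h2 : (1 + l)/l = 1 + l⁻¹ := by field_simp; ring
        linarith [h2 ▸ h1]
      obtain ⟨z, hz1, hz2⟩ := hsmul (1 + l⁻¹) hinv v
      refine ⟨z, ?_, ?_⟩
      · rw [hz1, hfv, hl1]; field_simp; ring
      · rw [hz2, hgv, hl2]; field_simp; ring
  constructor
  · -- Closedness
    rcases Nat.eq_zero_or_pos n with hn | hn
    · subst hn
      have hall : ∀ x : Fin 0 → ℝ, x = 0 := fun x => Subsingleton.elim _ _
      have : {p : ℝ × ℝ | ∃ x : Fin 0 → ℝ, p = (f x, g x)} = {(f 0, g 0)} := by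
        ext p
        simp only [Set.mem_setOf_eq, Set.mem_singleton_iff]
        constructor
        · rintro ⟨x, rfl⟩; rw [hall x]
        · rintro rfl; exact ⟨0, rfl⟩
      rw [this]; exact isClosed_singleton
    · haveI : NeZero n := ⟨hn.ne'⟩
      have hsph : IsCompact (Metric.sphere (0 : Fin n → ℝ) 1) := isCompact_sphere _ _
      have hne : (Metric.sphere (0 : Fin n → ℝ) 1).Nonempty :=
        NormedSpace.sphere_nonempty.mpr zero_le_one
      have hcont : Continuous (fun x : Fin n → ℝ => ‖((f x, g x) : ℝ × ℝ)‖) :=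
        (hfc.prodMk hgc).norm
      obtain ⟨u0, hu0, hmin⟩ := hsph.exists_isMinOn hne hcont.continuousOn
      set m : ℝ := ‖((f u0, g u0) : ℝ × ℝ)‖ with hm
      have hmpos : 0 < m := by
        rw [hm]
        rw [norm_pos_iff]
        intro h
        have h1 : f u0 = 0 := congrArg Prod.fst h
        have h2 : g u0 = 0 := congrArg Prod.snd h
        have := hzero u0 h1 h2
        rw [mem_sphere_zero_iff_norm, this] at hu0
        simp at hu0
      -- coercivity bound
      have hbound : ∀ x : Fin n → ℝ, m * ‖x‖^2 ≤ ‖((f x, g x) : ℝ × ℝ)‖ := by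
        intro x
        by_cases hx : x = 0
        · subst hx; simp [norm_nonneg]
        · set c : ℝ := ‖x‖ with hc
          have hcpos : 0 < c := norm_pos_iff.mpr hx
          set w : Fin n → ℝ := c⁻¹ • x with hw
          have hwsph : w ∈ Metric.sphere (0 : Fin n → ℝ) 1 := by
            rw [mem_sphere_zero_iff_norm, hw, norm_smul, norm_inv, norm_norm]
            field_simp
          have hfw : f x = c^2 * f w := by
            rw [hw, hf w, dines_quad_smul, ← hf x]
            field_simp
          have hgw : g x = c^2 * g w := by
            rw [hw, hg w, dines_quad_smul, ← hg x]
            field_simp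
          have heq : ((f x, g x) : ℝ × ℝ) = (c^2) • ((f w, g w) : ℝ × ℝ) := by
            rw [Prod.smul_mk, smul_eq_mul, smul_eq_mul, hfw, hgw]
          rw [heq, norm_smul]
          have : ‖(c:ℝ)^2‖ = c^2 := by
            rw [Real.norm_eq_abs, abs_of_nonneg (by positivity)]
          rw [this]
          have hle : m ≤ ‖((f w, g w) : ℝ × ℝ)‖ := hmin hwsph
          have := mul_le_mul_of_nonneg_right hle (sq_nonneg c)
          linarith
      apply IsSeqClosed.isClosed
      intro p q hpmem hq
      choose xs hxs using hpmem
      obtain ⟨C, hC⟩ : ∃ C : ℝ, ∀ k, ‖p k‖ ≤ C := by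
        have := hq.norm.bddAbove_range
        obtain ⟨C, hC⟩ := this
        exact ⟨C, fun k => hC ⟨k, rfl⟩⟩
      set R : ℝ := Real.sqrt (C / m) with hR
      have hxsball : ∀ k, xs k ∈ Metric.closedBall (0 : Fin n → ℝ) R := by
        intro k
        rw [Metric.mem_closedBall, dist_zero_right]
        have h1 : m * ‖xs k‖^2 ≤ ‖p k‖ := by rw [hxs k]; exact hbound (xs k)
        have h2 : ‖xs k‖^2 ≤ C / m := by
          rw [le_div_iff₀ hmpos]
          calc ‖xs k‖^2 * m = m * ‖xs k‖^2 := by ring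
          _ ≤ ‖p k‖ := h1
          _ ≤ C := hC k
        rw [hR]
        exact Real.le_sqrt_of_sq_le h2
      obtain ⟨a, _, φ', hφ', hconv⟩ :=
        tendsto_subseq_of_bounded (Metric.isBounded_closedBall) hxsball
      have hFt : Filter.Tendsto (fun k => ((f (xs (φ' k)), g (xs (φ' k))) : ℝ × ℝ))
          Filter.atTop (nhds (f a, g a)) :=
        ((hfc.tendsto a).comp hconv).prodMk_nhds ((hgc.tendsto a).comp hconv)
      have hpt : Filter.Tendsto (fun k => p (φ' k)) Filter.atTop (nhds q) :=
        hq.comp hφ'.tendsto_atTop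
      have : (fun k => p (φ' k)) = fun k => ((f (xs (φ' k)), g (xs (φ' k))) : ℝ × ℝ) := by
        funext k; exact hxs (φ' k)
      rw [this] at hpt
      have := tendsto_nhds_unique hpt hFt
      exact ⟨a, this⟩
  · -- Convexity
    rintro p ⟨x, rfl⟩ q ⟨y, rfl⟩ a b ha hb hab
    obtain ⟨z1, h1f, h1g⟩ := hsmul a ha x
    obtain ⟨z2, h2f, h2g⟩ := hsmul b hb y
    obtain ⟨z, hzf, hzg⟩ := hadd z1 z2
    refine ⟨z, ?_⟩
    have : f z = a * f x + b * f y := by rw [hzf, h1f, h2f]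
    have h2 : g z = a * g x + b * g y := by rw [hzg, h1g, h2g]
    simp [Prod.ext_iff, this, h2, smul_eq_mul]
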